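/- For every positive integers k and n, ∑_{(a₁,…,a_k): 1≤aᵢ≤n, gcd(a₁⋯a_k,n)=1, gcd(a₁+⋯+a_k,n)=1} gcd(a₁+⋯+a_k−1, n) = φ_k(n)·σ₀(n). -/

import Mathlib

open Finset

/-- The `k`-dimensional generalized Euler function `φ_k(n)`. -/
def tothPhi (k n : ℕ) : ℕ :=
  ((Fintype.piFinset fun _ : Fin k => Finset.Icc 1 n).filter
    (fun a => Nat.gcd (∏ i, a i) n = 1 ∧ Nat.gcd (∑ i, a i) n = 1)).card

section TothAux

open scoped Classical in
/-- The ZMod-side analogue of the tuple set. -/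
noncomputable def tothT (k n : ℕ) [NeZero n] : Finset (Fin k → ZMod n) :=
  Finset.univ.filter fun f => IsUnit (∏ i, f i) ∧ IsUnit (∑ i, f i)

variable {k n : ℕ}

lemma mem_tothT [NeZero n] {f : Fin k → ZMod n} :
    f ∈ tothT k n ↔ IsUnit (∏ i, f i) ∧ IsUnit (∑ i, f i) := by
  simp [tothT]

lemma gcd_val_natCast (n : ℕ) [NeZero n] (m : ℕ) :
    Nat.gcd ((m : ZMod n)).val n = Nat.gcd m n := by
  rw [ZMod.val_natCast, ← Nat.gcd_rec n m, Nat.gcd_comm]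

lemma gcd_eq_sum_totient (m n : ℕ) (hn : n ≠ 0) :
    Nat.gcd m n = ∑ d ∈ n.divisors.filter (· ∣ m), Nat.totient d := by
  conv_lhs => rw [← Nat.sum_totient (Nat.gcd m n)]
  apply Finset.sum_congr _ (fun _ _ => rfl)
  ext d
  simp only [Nat.mem_divisors, Finset.mem_filter, Nat.dvd_gcd_iff, Nat.gcd_eq_zero_iff, ne_eq]
  tauto

lemma card_filter_isUnit (d : ℕ) [NeZero d] [DecidablePred (IsUnit : ZMod d → Prop)] :
    (Finset.univ.filter (IsUnit : ZMod d → Prop)).card = Nat.totient d := by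
  rw [← ZMod.card_units_eq_totient d, ← Fintype.card_subtype]
  refine (Fintype.card_congr (Equiv.ofBijective (fun u : (ZMod d)ˣ => ⟨(u : ZMod d), u.isUnit⟩)
    ⟨fun a b h => Units.ext (congrArg Subtype.val h), ?_⟩)).symm
  rintro ⟨x, hx⟩
  exact ⟨hx.unit, Subtype.ext hx.unit_spec⟩

/-- toIcc sends a residue back to its representative in `[1, n]`. -/
def toIcc (n : ℕ) [NeZero n] (x : ZMod n) : ℕ := if x.val = 0 then n else x.val

lemma toIcc_mem [NeZero n] (x : ZMod n) : toIcc n x ∈ Finset.Icc 1 n := by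
  unfold toIcc
  split_ifs with h
  · exact Finset.mem_Icc.mpr ⟨Nat.one_le_iff_ne_zero.mpr (NeZero.ne n), le_rfl⟩
  · exact Finset.mem_Icc.mpr ⟨Nat.one_le_iff_ne_zero.mpr h, (ZMod.val_lt x).le⟩

lemma cast_toIcc [NeZero n] (x : ZMod n) : ((toIcc n x : ℕ) : ZMod n) = x := by
  unfold toIcc
  split_ifs with h
  · rw [ZMod.natCast_self, (ZMod.val_eq_zero x).mp h]
  · rw [ZMod.natCast_val, ZMod.cast_id]

lemma toIcc_cast [NeZero n] {a : ℕ} (ha : a ∈ Finset.Icc 1 n) : toIcc n ((a : ℕ) : ZMod n) = a := by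
  obtain ⟨h1, h2⟩ := Finset.mem_Icc.mp ha
  unfold toIcc
  rcases eq_or_lt_of_le h2 with rfl | h
  · simp [ZMod.val_natCast]
  · rw [ZMod.val_natCast, Nat.mod_eq_of_lt h]
    split_ifs with h0
    · omega
    · rfl

lemma toth_transfer (hk : 0 < k) [NeZero n] (w : ZMod n → ℕ) :
    ∑ a ∈ (Fintype.piFinset fun _ : Fin k => Finset.Icc 1 n).filter
        (fun a => Nat.gcd (∏ i, a i) n = 1 ∧ Nat.gcd (∑ i, a i) n = 1),
      w (((∑ i, a i : ℕ) : ZMod n)) = ∑ f ∈ tothT k n, w (∑ i, f i) := by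
  classical
  refine Finset.sum_nbij' (i := fun a => fun i => ((a i : ℕ) : ZMod n))
    (j := fun f => fun i => toIcc n (f i)) ?_ ?_ ?_ ?_ ?_
  · intro a ha
    obtain ⟨hmem, hp, hs⟩ := Finset.mem_filter.mp ha
    rw [mem_tothT]
    constructor
    · rw [← Nat.cast_prod]
      exact (ZMod.isUnit_iff_coprime _ n).mpr hp
    · rw [← Nat.cast_sum]
      exact (ZMod.isUnit_iff_coprime _ n).mpr hs
  · intro f hf
    obtain ⟨hp, hs⟩ := mem_tothT.mp hf
    rw [Finset.mem_filter]
    refine ⟨Fintype.mem_piFinset.mpr fun i => toIcc_mem _, ?_, ?_⟩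
    · apply (ZMod.isUnit_iff_coprime _ n).mp
      rw [Nat.cast_prod]
      simpa only [cast_toIcc] using hp
    · apply (ZMod.isUnit_iff_coprime _ n).mp
      rw [Nat.cast_sum]
      simpa only [cast_toIcc] using hs
  · intro a ha
    funext i
    exact toIcc_cast (Fintype.mem_piFinset.mp (Finset.mem_filter.mp ha).1 i)
  · intro f hf
    funext i
    exact cast_toIcc (f i)
  · intro a ha
    rw [Nat.cast_sum]

lemma toth_equid (k n : ℕ) [NeZero n] {d : ℕ} (hd : d ∣ n) (hd0 : d ≠ 0) :
    Nat.totient d * ((tothT k n).filter (fun f => d ∣ ((∑ i, f i) - 1).val)).card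
      = (tothT k n).card := by
  classical
  haveI : NeZero d := ⟨hd0⟩
  set π := ZMod.castHom hd (ZMod d) with hπ
  have hcond : ∀ x : ZMod n, (d ∣ (x - 1).val ↔ π x = 1) := by
    intro x
    rw [← ZMod.natCast_eq_zero_iff, ZMod.natCast_val,
      ← ZMod.castHom_apply (h := hd), map_sub, map_one, sub_eq_zero]
  have key : ∀ (c : (ZMod n)ˣ) (u : ZMod d),
      ((tothT k n).filter (fun f => π (∑ i, f i) = u)).card
        = ((tothT k n).filter (fun f => π (∑ i, f i) = π (c : ZMod n) * u)).card := by
    intro c u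
    refine Finset.card_bij' (fun f _ => fun i => (c : ZMod n) * f i)
      (fun f _ => fun i => ((c⁻¹ : (ZMod n)ˣ) : ZMod n) * f i) ?_ ?_ ?_ ?_
    · intro f hf
      obtain ⟨hfT, hu⟩ := Finset.mem_filter.mp hf
      obtain ⟨hp, hs⟩ := mem_tothT.mp hfT
      rw [Finset.mem_filter, mem_tothT]
      rw [Finset.prod_mul_distrib, Finset.prod_const, ← Finset.mul_sum]
      exact ⟨⟨(c.isUnit.pow _).mul hp, c.isUnit.mul hs⟩, by rw [map_mul, hu]⟩
    · intro f hf
      obtain ⟨hfT, hu⟩ := Finset.mem_filter.mp hf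
      obtain ⟨hp, hs⟩ := mem_tothT.mp hfT
      rw [Finset.mem_filter, mem_tothT]
      rw [Finset.prod_mul_distrib, Finset.prod_const, ← Finset.mul_sum]
      refine ⟨⟨(c⁻¹.isUnit.pow _).mul hp, c⁻¹.isUnit.mul hs⟩, ?_⟩
      rw [map_mul, hu, ← mul_assoc, ← map_mul, Units.inv_mul, map_one, one_mul]
    · intro f hf
      funext i
      simp
    · intro f hf
      funext i
      simp
  have fib : ∀ u : ZMod d, IsUnit u →
      ((tothT k n).filter (fun f => π (∑ i, f i) = u)).card
        = ((tothT k n).filter (fun f => π (∑ i, f i) = 1)).card := by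
    intro u hu
    obtain ⟨c, hc⟩ := ZMod.unitsMap_surjective hd hu.unit
    have hπc : π (c : ZMod n) = u := by
      have h := congrArg (Units.val) hc
      rw [ZMod.unitsMap_def] at h
      simpa [hπ] using h
    have h := key c 1
    rw [mul_one, hπc] at h
    exact h.symm
  have hfe : (tothT k n).filter (fun f => d ∣ ((∑ i, f i) - 1).val)
      = (tothT k n).filter (fun f => π (∑ i, f i) = 1) :=
    Finset.filter_congr (fun f _ => by rw [hcond])
  have count : (tothT k n).card
      = ∑ u : ZMod d, ((tothT k n).filter (fun f => π (∑ i, f i) = u)).card :=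
    Finset.card_eq_sum_card_fiberwise (fun f _ => Finset.mem_univ _)
  have step : ∀ u : ZMod d, ((tothT k n).filter (fun f => π (∑ i, f i) = u)).card
      = if IsUnit u then ((tothT k n).filter (fun f => π (∑ i, f i) = 1)).card else 0 := by
    intro u
    split_ifs with hu
    · exact fib u hu
    · rw [Finset.card_eq_zero, Finset.filter_eq_empty_iff]
      intro f hf he
      exact hu (he ▸ (mem_tothT.mp hf).2.map π)
  rw [hfe, count, Finset.sum_congr rfl (fun u _ => step u), ← Finset.sum_filter,
    Finset.sum_const, smul_eq_mul, card_filter_isUnit]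

lemma toth_zmod_main (k n : ℕ) (hn : 0 < n) [NeZero n] :
    ∑ f ∈ tothT k n, Nat.gcd ((∑ i, f i) - 1).val n = (tothT k n).card * n.divisors.card := by
  classical
  have expand : ∀ f ∈ tothT k n, Nat.gcd ((∑ i, f i) - 1).val n
      = ∑ d ∈ n.divisors, if d ∣ ((∑ i, f i) - 1).val then Nat.totient d else 0 := by
    intro f _
    rw [gcd_eq_sum_totient _ n hn.ne', Finset.sum_filter]
  rw [Finset.sum_congr rfl expand, Finset.sum_comm]
  have h : ∀ d ∈ n.divisors,
      (∑ f ∈ tothT k n, if d ∣ ((∑ i, f i) - 1).val then Nat.totient d else 0)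
        = (tothT k n).card := by
    intro d hdmem
    obtain ⟨hd, hn0⟩ := Nat.mem_divisors.mp hdmem
    have hd0 : d ≠ 0 := by
      rintro rfl
      exact hn.ne' (Nat.eq_zero_of_zero_dvd hd)
    rw [← Finset.sum_filter, Finset.sum_const, smul_eq_mul, mul_comm]
    exact toth_equid k n hd hd0
  rw [Finset.sum_congr rfl h, Finset.sum_const, smul_eq_mul, mul_comm]

end TothAux

/-- **Tóth's identity**. -/
theorem toth_identity (k n : ℕ) (hk : 0 < k) (hn : 0 < n) :
    ∑ a ∈ (Fintype.piFinset fun _ : Fin k => Finset.Icc 1 n).filter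
        (fun a => Nat.gcd (∏ i, a i) n = 1 ∧ Nat.gcd (∑ i, a i) n = 1),
      Nat.gcd ((∑ i, a i) - 1) n =
      tothPhi k n * n.divisors.card := by
  haveI : NeZero n := ⟨hn.ne'⟩
  have h1 : ∀ a ∈ (Fintype.piFinset fun _ : Fin k => Finset.Icc 1 n).filter
        (fun a => Nat.gcd (∏ i, a i) n = 1 ∧ Nat.gcd (∑ i, a i) n = 1),
      Nat.gcd ((∑ i, a i) - 1) n
        = (fun x : ZMod n => Nat.gcd (x - 1).val n) (((∑ i, a i : ℕ) : ZMod n)) := by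
    intro a ha
    have hmem := (Finset.mem_filter.mp ha).1
    have hs1 : 1 ≤ ∑ i, a i := by
      have hi0 : a ⟨0, hk⟩ ∈ Finset.Icc 1 n := Fintype.mem_piFinset.mp hmem ⟨0, hk⟩
      calc 1 ≤ a ⟨0, hk⟩ := (Finset.mem_Icc.mp hi0).1
        _ ≤ ∑ i, a i := Finset.single_le_sum (fun i _ => Nat.zero_le _) (Finset.mem_univ _)
    simp only
    rw [show ((∑ i, a i : ℕ) : ZMod n) - 1 = (((∑ i, a i) - 1 : ℕ) : ZMod n) by
      rw [Nat.cast_sub hs1, Nat.cast_one], gcd_val_natCast]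
  rw [Finset.sum_congr rfl h1, toth_transfer (n := n) hk (fun x : ZMod n => Nat.gcd (x - 1).val n), toth_zmod_main k n hn]
  congr 1
  have h2 := toth_transfer (n := n) hk (fun _ => 1)
  simpa [tothPhi] using h2.symm
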